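/- With N_q(q-2) the number of permutation polynomials of F_q of degree q-2 with f(0)=0, one has the bounds (1 - 1/q)((q-1)! - q^{q/2}/(q-1)) ≤ N_q(q-2) ≤ (1 - 1/q)((q-1)! + q^{q/2}/(q-1)). -/

import Mathlib

open Polynomial Finset

namespace Stmt11

set_option linter.unusedSectionVars false

variable {F : Type*} [Field F] [Fintype F] [DecidableEq F]

lemma sum_univ_eq_zero (hq3 : 3 ≤ Fintype.card F) : ∑ x : F, x = 0 := by
  have h := FiniteField.sum_pow_lt_card_sub_one (K := F) 1 (by omega)
  simpa using h

lemma card_cast_eq_zero : ((Fintype.card F : ℕ) : F) = 0 :=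
  FiniteField.cast_card_eq_zero F

lemma card_sub_one_cast (hq3 : 3 ≤ Fintype.card F) :
    ((Fintype.card F - 1 : ℕ) : F) = -1 := by
  rw [Nat.cast_sub (by omega), card_cast_eq_zero]
  simp

lemma sum_pow_card_sub_one (hq3 : 3 ≤ Fintype.card F) :
    ∑ x : F, x ^ (Fintype.card F - 1) = -1 := by
  have h1 : ∀ x : F, x ^ (Fintype.card F - 1) = if x = 0 then 0 else 1 := by
    intro x
    split_ifs with h
    · subst h; exact zero_pow (by omega)
    · exact FiniteField.pow_card_sub_one_eq_one x h
  rw [Finset.sum_congr rfl fun x _ => h1 x, Finset.sum_ite, Finset.sum_const,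
    Finset.sum_const]
  have hcard : (Finset.univ.filter (fun x : F => ¬ x = 0)).card = Fintype.card F - 1 := by
    rw [Finset.filter_not, Finset.card_sdiff_of_subset (Finset.filter_subset _ _)]
    simp [Finset.filter_eq']
  rw [hcard]
  simp [← card_sub_one_cast (F := F) hq3]

/-- sum over x of x * eval x f  = - coeff (q-2) for low-degree f -/
lemma sum_mul_eval (hq3 : 3 ≤ Fintype.card F) (f : F[X])
    (hdeg : f.natDegree ≤ Fintype.card F - 2) :
    ∑ x : F, x * f.eval x = - f.coeff (Fintype.card F - 2) := by
  set q := Fintype.card F with hqdef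
  have hlt : f.natDegree < q - 1 := by omega
  have heval : ∀ x : F, f.eval x = ∑ i ∈ Finset.range (q - 1), f.coeff i * x ^ i :=
    fun x => eval_eq_sum_range' hlt x
  calc ∑ x : F, x * f.eval x
      = ∑ x : F, ∑ i ∈ Finset.range (q - 1), f.coeff i * x ^ (i + 1) := by
        refine Finset.sum_congr rfl fun x _ => ?_
        rw [heval x, Finset.mul_sum]
        exact Finset.sum_congr rfl fun i _ => by ring
    _ = ∑ i ∈ Finset.range (q - 1), f.coeff i * ∑ x : F, x ^ (i + 1) := by
        rw [Finset.sum_comm]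
        exact Finset.sum_congr rfl fun i _ => by rw [Finset.mul_sum]
    _ = - f.coeff (q - 2) := by
        rw [Finset.sum_eq_single (q - 2)]
        · rw [show q - 2 + 1 = q - 1 by omega, sum_pow_card_sub_one hq3]; ring
        · intro i hi hne
          rw [FiniteField.sum_pow_lt_card_sub_one (K := F) (i + 1)
            (by simp only [Finset.mem_range] at hi; omega), mul_zero]
        · intro h
          simp only [Finset.mem_range] at h
          omega

/-- interpolation polynomial of a function σ : F → F -/
noncomputable def gpoly (σ : F → F) : F[X] :=
  ∑ c : F, C (σ c) * (1 - (X - C c) ^ (Fintype.card F - 1))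

lemma gpoly_eval (hq3 : 3 ≤ Fintype.card F) (σ : F → F) (x : F) :
    (gpoly σ).eval x = σ x := by
  unfold gpoly
  rw [eval_finset_sum]
  rw [Finset.sum_eq_single x]
  · simp [zero_pow (show Fintype.card F - 1 ≠ 0 by omega)]
  · intro c _ hne
    have : (x - c) ^ (Fintype.card F - 1) = 1 :=
      FiniteField.pow_card_sub_one_eq_one _ (sub_ne_zero.mpr (Ne.symm hne))
    simp [this]
  · simp

lemma coeff_one_sub_pow_top (hq3 : 3 ≤ Fintype.card F) (c : F) :
    (1 - (X - C c) ^ (Fintype.card F - 1)).coeff (Fintype.card F - 1) = -1 := by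
  have h : (X - C c : F[X]) = X + C (-c) := by rw [map_neg, sub_eq_add_neg]
  rw [coeff_sub, h, coeff_X_add_C_pow]
  rw [coeff_one, if_neg (by omega)]
  simp

lemma coeff_one_sub_pow_snd (hq3 : 3 ≤ Fintype.card F) (c : F) :
    (1 - (X - C c) ^ (Fintype.card F - 1)).coeff (Fintype.card F - 2) = -c := by
  have h : (X - C c : F[X]) = X + C (-c) := by rw [map_neg, sub_eq_add_neg]
  rw [coeff_sub, h, coeff_X_add_C_pow]
  rw [coeff_one, if_neg (by omega)]
  rw [show Fintype.card F - 1 - (Fintype.card F - 2) = 1 by omega]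
  rw [show (Fintype.card F - 1).choose (Fintype.card F - 2) = Fintype.card F - 1 by
    rw [show Fintype.card F - 2 = Fintype.card F - 1 - 1 by omega,
      Nat.choose_symm (by omega), Nat.choose_one_right]]
  rw [card_sub_one_cast hq3]
  ring

lemma gpoly_coeff_top (hq3 : 3 ≤ Fintype.card F) (σ : F → F) :
    (gpoly σ).coeff (Fintype.card F - 1) = - ∑ c : F, σ c := by
  unfold gpoly
  rw [finset_sum_coeff]
  rw [Finset.sum_congr rfl (fun c _ => ?_), ← Finset.sum_neg_distrib]
  rw [coeff_C_mul, coeff_one_sub_pow_top hq3]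
  ring

lemma gpoly_coeff_snd (hq3 : 3 ≤ Fintype.card F) (σ : F → F) :
    (gpoly σ).coeff (Fintype.card F - 2) = - ∑ c : F, c * σ c := by
  unfold gpoly
  rw [finset_sum_coeff]
  rw [Finset.sum_congr rfl (fun c _ => ?_), ← Finset.sum_neg_distrib]
  rw [coeff_C_mul, coeff_one_sub_pow_snd hq3]
  ring

lemma gpoly_natDegree_le (hq3 : 3 ≤ Fintype.card F) (σ : F → F) :
    (gpoly σ).natDegree ≤ Fintype.card F - 1 := by
  unfold gpoly
  refine natDegree_sum_le_of_forall_le _ _ fun c _ => ?_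
  refine (natDegree_C_mul_le _ _).trans ?_
  refine (natDegree_sub_le _ _).trans ?_
  simp [natDegree_pow, natDegree_X_sub_C]

lemma gpoly_natDegree_le_snd (hq3 : 3 ≤ Fintype.card F) (σ : F → F)
    (hsum : ∑ c : F, σ c = 0) :
    (gpoly σ).natDegree ≤ Fintype.card F - 2 := by
  rw [natDegree_le_iff_coeff_eq_zero]
  intro m hm
  rcases eq_or_ne m (Fintype.card F - 1) with rfl | hne
  · rw [gpoly_coeff_top hq3, hsum, neg_zero]
  · exact coeff_eq_zero_of_natDegree_lt (lt_of_le_of_lt (gpoly_natDegree_le hq3 σ) (by omega))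

lemma poly_eq_of_eval_eq (f g : F[X]) (hf : f.natDegree < Fintype.card F)
    (hg : g.natDegree < Fintype.card F) (h : ∀ x, f.eval x = g.eval x) : f = g := by
  have hdeg : (f - g).natDegree < Fintype.card F :=
    lt_of_le_of_lt (natDegree_sub_le f g) (max_lt hf hg)
  have := eq_zero_of_natDegree_lt_card_of_eval_eq_zero (f - g)
    (f := (id : F → F)) Function.injective_id
    (fun x => by simp [h x]) (by simpa using hdeg)
  exact sub_eq_zero.mp this

noncomputable def polyEquiv (hq3 : 3 ≤ Fintype.card F) :
    {f : F[X] // f.natDegree = Fintype.card F - 2 ∧ f.coeff 0 = 0 ∧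
      Function.Bijective fun x => f.eval x} ≃
    {σ : Equiv.Perm F // σ 0 = 0 ∧ ∑ x : F, x * σ x ≠ 0} where
  toFun f :=
    ⟨Equiv.ofBijective _ f.2.2.2, by
      rw [Equiv.ofBijective_apply, ← coeff_zero_eq_eval_zero]
      exact f.2.2.1, by
      have hne : f.1 ≠ 0 := by
        intro h0
        have := f.2.1
        rw [h0, natDegree_zero] at this
        omega
      have hlc : f.1.coeff (Fintype.card F - 2) ≠ 0 := by
        have h2 := f.2.1
        intro h
        exact hne (leadingCoeff_eq_zero.mp (by rwa [leadingCoeff, h2]))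
      have hsum : ∑ x : F, x * (Equiv.ofBijective _ f.2.2.2) x
          = - f.1.coeff (Fintype.card F - 2) := by
        rw [← sum_mul_eval hq3 f.1 (le_of_eq f.2.1)]
        rfl
      rw [hsum]
      exact neg_ne_zero.mpr hlc⟩
  invFun σ :=
    ⟨gpoly ⇑σ.1, by
      have hsum0 : ∑ c : F, σ.1 c = 0 := by
        rw [show (∑ c : F, σ.1 c) = ∑ c : F, c from Equiv.sum_comp σ.1 (fun x => x)]
        exact sum_univ_eq_zero hq3
      have hle : (gpoly ⇑σ.1).natDegree ≤ Fintype.card F - 2 :=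
        gpoly_natDegree_le_snd hq3 _ hsum0
      have hco : (gpoly ⇑σ.1).coeff (Fintype.card F - 2) ≠ 0 := by
        rw [gpoly_coeff_snd hq3]
        exact neg_ne_zero.mpr σ.2.2
      refine ⟨le_antisymm hle (le_natDegree_of_ne_zero hco), ?_, ?_⟩
      · rw [coeff_zero_eq_eval_zero, gpoly_eval hq3]
        exact σ.2.1
      · have : (fun x => (gpoly ⇑σ.1).eval x) = ⇑σ.1 := funext fun x => gpoly_eval hq3 _ x
        rw [this]
        exact σ.1.bijective⟩
  left_inv f := by
    refine Subtype.ext ?_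
    refine poly_eq_of_eval_eq _ _ ?_ ?_ ?_
    · exact lt_of_le_of_lt (gpoly_natDegree_le hq3 _) (by omega)
    · rw [f.2.1]; omega
    · intro x
      rw [gpoly_eval hq3]
      rfl
  right_inv σ := by
    refine Subtype.ext (Equiv.ext fun x => ?_)
    rw [Equiv.ofBijective_apply, gpoly_eval hq3]

/-- the weighted sum of a permutation -/
def tmap (σ : Equiv.Perm F) : F := ∑ x : F, x * σ x

/-- number of permutations fixing 0 with given weighted sum -/
noncomputable def cnt (F : Type*) [Field F] [Fintype F] [DecidableEq F] (v : F) : ℕ :=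
  (Finset.univ.filter (fun σ : Equiv.Perm F => σ 0 = 0 ∧ tmap σ = v)).card

lemma card_fix_zero (hq3 : 3 ≤ Fintype.card F) :
    (Finset.univ.filter (fun σ : Equiv.Perm F => σ 0 = 0)).card
      = (Fintype.card F - 1).factorial := by
  classical
  have hfib : ∀ b : F, (Finset.univ.filter (fun σ : Equiv.Perm F => σ 0 = b)).card
      = (Finset.univ.filter (fun σ : Equiv.Perm F => σ 0 = 0)).card := by
    intro b
    refine Finset.card_bij' (fun σ _ => σ.trans (Equiv.addRight (-b)))
      (fun σ _ => σ.trans (Equiv.addRight b)) ?_ ?_ ?_ ?_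
    · intro σ hσ
      simp only [Finset.mem_filter, Finset.mem_univ, true_and] at hσ ⊢
      simp [hσ]
    · intro σ hσ
      simp only [Finset.mem_filter, Finset.mem_univ, true_and] at hσ ⊢
      simp [hσ]
    · intro σ _; ext x; simp
    · intro σ _; ext x; simp
  have hsum : (Fintype.card F) * (Finset.univ.filter
      (fun σ : Equiv.Perm F => σ 0 = 0)).card = (Fintype.card F).factorial := by
    have h1 : (Finset.univ : Finset (Equiv.Perm F)).card
        = ∑ b : F, (Finset.univ.filter (fun σ : Equiv.Perm F => σ 0 = b)).card :=
      Finset.card_eq_sum_card_fiberwise (fun σ _ => Finset.mem_univ (σ 0))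
    rw [Finset.card_univ, Fintype.card_perm] at h1
    rw [← h1.symm] at *
    rw [h1, Finset.sum_congr rfl fun b _ => hfib b, Finset.sum_const, Finset.card_univ,
      smul_eq_mul]
  have hq : Fintype.card F = (Fintype.card F - 1) + 1 := by omega
  rw [hq, Nat.factorial_succ] at hsum
  exact Nat.eq_of_mul_eq_mul_left (by omega) hsum

lemma sum_cnt (hq3 : 3 ≤ Fintype.card F) :
    ∑ v : F, cnt F v = (Fintype.card F - 1).factorial := by
  classical
  rw [← card_fix_zero hq3]
  have h := Finset.card_eq_sum_card_fiberwise
    (s := Finset.univ.filter (fun σ : Equiv.Perm F => σ 0 = 0)) (t := Finset.univ)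
    (f := fun σ => tmap σ) (fun σ _ => Finset.mem_univ _)
  rw [h]
  refine Finset.sum_congr rfl fun v _ => ?_
  rw [Finset.filter_filter]
  rfl

lemma cnt_eq_cnt_one (hq3 : 3 ≤ Fintype.card F) {v : F} (hv : v ≠ 0) :
    cnt F v = cnt F 1 := by
  classical
  unfold cnt
  refine (Finset.card_bij' (fun σ _ => σ.trans (Equiv.mulLeft₀ v hv))
    (fun σ _ => σ.trans (Equiv.mulLeft₀ v⁻¹ (inv_ne_zero hv))) ?_ ?_ ?_ ?_).symm
  · intro σ hσ
    simp only [Finset.mem_filter, Finset.mem_univ, true_and] at hσ ⊢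
    obtain ⟨h0, ht⟩ := hσ
    refine ⟨by simp [h0], ?_⟩
    unfold tmap at ht ⊢
    simp only [Equiv.trans_apply, Equiv.mulLeft₀_apply]
    rw [show (∑ x : F, x * (v * σ x)) = v * ∑ x : F, x * σ x by
      rw [Finset.mul_sum]; exact Finset.sum_congr rfl fun x _ => by ring]
    rw [ht, mul_one]
  · intro σ hσ
    simp only [Finset.mem_filter, Finset.mem_univ, true_and] at hσ ⊢
    obtain ⟨h0, ht⟩ := hσ
    refine ⟨by simp [h0], ?_⟩
    unfold tmap at ht ⊢
    simp only [Equiv.trans_apply, Equiv.mulLeft₀_apply]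
    rw [show (∑ x : F, x * (v⁻¹ * σ x)) = v⁻¹ * ∑ x : F, x * σ x by
      rw [Finset.mul_sum]; exact Finset.sum_congr rfl fun x _ => by ring]
    rw [ht, inv_mul_cancel₀ hv]
  · intro σ _; ext x
    simp only [Equiv.trans_apply, Equiv.mulLeft₀_apply]
    rw [← mul_assoc, inv_mul_cancel₀ hv, one_mul]
  · intro σ _; ext x
    simp only [Equiv.trans_apply, Equiv.mulLeft₀_apply]
    rw [← mul_assoc, mul_inv_cancel₀ hv, one_mul]

lemma cnt_sum_eq (hq3 : 3 ≤ Fintype.card F) :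
    cnt F 0 + (Fintype.card F - 1) * cnt F 1 = (Fintype.card F - 1).factorial := by
  classical
  rw [← sum_cnt hq3]
  rw [← Finset.add_sum_erase Finset.univ _ (Finset.mem_univ (0 : F))]
  congr 1
  rw [Finset.sum_congr rfl (fun v hv => cnt_eq_cnt_one hq3 (Finset.mem_erase.mp hv).1),
    Finset.sum_const, Finset.card_erase_of_mem (Finset.mem_univ _), Finset.card_univ,
    smul_eq_mul]

lemma cnt_add_N (hq3 : 3 ≤ Fintype.card F) :
    cnt F 0 + (Finset.univ.filter
      (fun σ : Equiv.Perm F => σ 0 = 0 ∧ tmap σ ≠ 0)).card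
      = (Fintype.card F - 1).factorial := by
  classical
  rw [← card_fix_zero hq3]
  have := Finset.card_filter_add_card_filter_not
    (s := Finset.univ.filter (fun σ : Equiv.Perm F => σ 0 = 0))
    (p := fun σ => tmap σ = 0)
  rw [Finset.filter_filter, Finset.filter_filter] at this
  exact this

section CharSum

open Complex

/-- fixed primitive additive character -/
noncomputable def psi (F : Type*) [Field F] [Fintype F] : AddChar F ℂ :=
  AddChar.FiniteField.primitiveChar_to_Complex F

lemma psi_prim : (psi F).IsPrimitive :=
  AddChar.FiniteField.primitiveChar_to_Complex_isPrimitive F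

lemma psi_ne_one : (psi F) ≠ 1 := by
  intro h
  have := psi_prim (F := F) (one_ne_zero)
  rw [AddChar.mulShift_one] at this
  exact this h

lemma psi_map_sum {ι : Type*} (s : Finset ι) (f : ι → F) :
    psi F (∑ i ∈ s, f i) = ∏ i ∈ s, psi F (f i) := by
  classical
  induction s using Finset.cons_induction with
  | empty => simp
  | cons a s ha ih =>
      rw [Finset.sum_cons, Finset.prod_cons, AddChar.map_add_eq_mul, ih]

lemma psi_conj (a : F) : (starRingEnd ℂ) (psi F a) = psi F (-a) := by
  have hR : 0 < ringChar F :=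
    Nat.pos_of_ne_zero (CharP.ringChar_ne_zero_of_finite F)
  rw [AddChar.starComp_apply hR, AddChar.inv_apply]

lemma psi_sum_mul (c : F) :
    ∑ u : F, psi F (c * u) = if c = 0 then (Fintype.card F : ℂ) else 0 := by
  classical
  have h := AddChar.sum_mulShift (ψ := psi F) c psi_prim
  rw [show (∑ u : F, psi F (c * u)) = ∑ u : F, psi F (u * c) from
    Finset.sum_congr rfl fun u _ => by rw [mul_comm], h]
  split_ifs <;> simp

/-- weight of a function -/
noncomputable def wfun (j : F → F) : ℂ := psi F (∑ x : F, x * j x)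

lemma keyT (ρ : Equiv.Perm F) :
    ∑ j : F → F, wfun j * (starRingEnd ℂ) (wfun (j ∘ ρ)) =
      if ρ = 1 then ((Fintype.card F : ℂ)) ^ (Fintype.card F) else 0 := by
  classical
  have hterm : ∀ j : F → F, wfun j * (starRingEnd ℂ) (wfun (j ∘ ρ)) =
      ∏ x : F, psi F ((x - ρ⁻¹ x) * j x) := by
    intro j
    unfold wfun
    rw [psi_conj, ← AddChar.map_add_eq_mul]
    have hre : ∑ x : F, x * (j ∘ ρ) x = ∑ x : F, (ρ⁻¹ x) * j x := by
      rw [← Equiv.sum_comp ρ (fun y => (ρ⁻¹ y) * j y)]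
      exact Finset.sum_congr rfl fun x _ => by simp
    rw [hre, ← Finset.sum_neg_distrib, ← Finset.sum_add_distrib, ← psi_map_sum]
    congr 1
    exact Finset.sum_congr rfl fun x _ => by ring
  rw [Finset.sum_congr rfl fun j _ => hterm j]
  have hswap : ∑ j : F → F, ∏ x : F, psi F ((x - ρ⁻¹ x) * j x)
      = ∏ x : F, ∑ u : F, psi F ((x - ρ⁻¹ x) * u) := by
    rw [Finset.prod_univ_sum (fun _ => Finset.univ) (fun x u => psi F ((x - ρ⁻¹ x) * u))]
    rw [Fintype.piFinset_univ]
  rw [hswap]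
  split_ifs with hρ
  · subst hρ
    rw [Finset.prod_congr rfl fun x _ => ?_, Finset.prod_const, Finset.card_univ]
    rw [psi_sum_mul, if_pos (by simp)]
  · obtain ⟨y, hy⟩ : ∃ y, ρ y ≠ y := by
      by_contra h
      push_neg at h
      exact hρ (Equiv.ext fun x => by simp [h x])
    refine Finset.prod_eq_zero (Finset.mem_univ (ρ y)) ?_
    rw [psi_sum_mul, if_neg]
    simp only [Equiv.Perm.inv_def, Equiv.symm_apply_apply, sub_ne_zero]
    exact fun h => hy h

end CharSum

section CharSum2

open Complex

/-- symmetrized weight -/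
noncomputable def Qf (j : F → F) : ℂ := ∑ σ : Equiv.Perm F, wfun (j ∘ σ)

lemma Qf_inner (σ τ : Equiv.Perm F) :
    ∑ j : F → F, wfun (j ∘ σ) * (starRingEnd ℂ) (wfun (j ∘ τ))
      = if τ = σ then ((Fintype.card F : ℂ)) ^ (Fintype.card F) else 0 := by
  classical
  have hre : ∑ j : F → F, wfun (j ∘ σ) * (starRingEnd ℂ) (wfun (j ∘ τ))
      = ∑ k : F → F, wfun k * (starRingEnd ℂ) (wfun (k ∘ ⇑(σ⁻¹ * τ))) := by
    refine (Equiv.sum_comp (Equiv.arrowCongr (σ : F ≃ F) (Equiv.refl F))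
      (fun j => wfun (j ∘ σ) * (starRingEnd ℂ) (wfun (j ∘ τ)))).symm.trans ?_
    refine Finset.sum_congr rfl fun k _ => ?_
    have h1 : (Equiv.arrowCongr (σ : F ≃ F) (Equiv.refl F)) k ∘ σ = k := by
      funext x; simp
    have h2 : (Equiv.arrowCongr (σ : F ≃ F) (Equiv.refl F)) k ∘ ⇑τ
        = k ∘ ⇑(σ⁻¹ * τ) := by
      funext x; rfl
    rw [h1, h2]
  rw [hre, keyT (σ⁻¹ * τ)]
  congr 1
  simp [inv_mul_eq_one, eq_comm]

lemma Qf_normSq_sum :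
    ∑ j : F → F, Qf j * (starRingEnd ℂ) (Qf j) =
      ((Fintype.card F).factorial : ℂ) * (Fintype.card F : ℂ) ^ (Fintype.card F) := by
  classical
  have expand : ∀ j : F → F, Qf j * (starRingEnd ℂ) (Qf j)
      = ∑ σ : Equiv.Perm F, ∑ τ : Equiv.Perm F,
          wfun (j ∘ σ) * (starRingEnd ℂ) (wfun (j ∘ τ)) := by
    intro j
    unfold Qf
    rw [map_sum, Finset.sum_mul_sum]
  rw [Finset.sum_congr rfl fun j _ => expand j]
  rw [Finset.sum_comm]
  rw [Finset.sum_congr rfl fun σ _ => Finset.sum_comm]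
  rw [Finset.sum_congr rfl fun σ _ => Finset.sum_congr rfl fun τ _ => Qf_inner σ τ]
  rw [Finset.sum_congr rfl fun σ _ =>
    Finset.sum_ite_eq' Finset.univ σ (fun _ => ((Fintype.card F : ℂ)) ^ (Fintype.card F))]
  simp [Finset.card_univ, Fintype.card_perm]

/-- the full character sum -/
noncomputable def Afull (F : Type*) [Field F] [Fintype F] [DecidableEq F] : ℂ :=
  ∑ σ : Equiv.Perm F, psi F (tmap σ)

lemma wfun_perm (σ : Equiv.Perm F) : wfun ⇑σ = psi F (tmap σ) := rfl

lemma Qf_perm (π : Equiv.Perm F) : Qf ⇑π = Afull F := by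
  unfold Qf Afull
  rw [← Equiv.sum_comp (Equiv.mulLeft π) (fun ρ : Equiv.Perm F => psi F (tmap ρ))]
  refine Finset.sum_congr rfl fun σ _ => ?_
  rw [← wfun_perm]
  congr 1

end CharSum2

section CharSum3

open Complex

/-- sum over permutations fixing zero -/
noncomputable def Spsi (F : Type*) [Field F] [Fintype F] [DecidableEq F] : ℂ :=
  ∑ σ ∈ Finset.univ.filter (fun σ : Equiv.Perm F => σ 0 = 0), psi F (tmap σ)

lemma Afull_eq (hq3 : 3 ≤ Fintype.card F) :
    Afull F = (Fintype.card F : ℂ) * Spsi F := by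
  classical
  have hA : Afull F = ∑ b : F, ∑ σ ∈ Finset.univ.filter
      (fun σ : Equiv.Perm F => σ 0 = b), psi F (tmap σ) := by
    unfold Afull
    exact (Finset.sum_fiberwise_of_maps_to (fun σ _ => Finset.mem_univ (σ 0)) _).symm
  have hfib : ∀ b : F, ∑ σ ∈ Finset.univ.filter
      (fun σ : Equiv.Perm F => σ 0 = b), psi F (tmap σ) = Spsi F := by
    intro b
    unfold Spsi
    refine Finset.sum_bij' (fun σ _ => σ.trans (Equiv.addRight (-b)))
      (fun σ _ => σ.trans (Equiv.addRight b)) ?_ ?_ ?_ ?_ ?_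
    · intro σ hσ
      simp only [Finset.mem_filter, Finset.mem_univ, true_and] at hσ ⊢
      simp [hσ]
    · intro σ hσ
      simp only [Finset.mem_filter, Finset.mem_univ, true_and] at hσ ⊢
      simp [hσ]
    · intro σ _; ext x; simp
    · intro σ _; ext x; simp
    · intro σ _
      congr 1
      unfold tmap
      simp only [Equiv.trans_apply, Equiv.coe_addRight]
      rw [Finset.sum_congr rfl (fun x _ => mul_add x (σ x) (-b)), Finset.sum_add_distrib]
      rw [← Finset.sum_mul, sum_univ_eq_zero hq3, zero_mul, add_zero]
  rw [hA, Finset.sum_congr rfl fun b _ => hfib b, Finset.sum_const, Finset.card_univ,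
    nsmul_eq_mul]

lemma Spsi_eq (hq3 : 3 ≤ Fintype.card F) :
    Spsi F = (cnt F 0 : ℂ) - (cnt F 1 : ℂ) := by
  classical
  have h : Spsi F = ∑ v : F, ∑ σ ∈ Finset.univ.filter
      (fun σ : Equiv.Perm F => σ 0 = 0 ∧ tmap σ = v), psi F v := by
    unfold Spsi
    rw [← Finset.sum_fiberwise_of_maps_to
      (fun (σ : Equiv.Perm F) _ => Finset.mem_univ (tmap σ))
      (fun σ => psi F (tmap σ))]
    refine Finset.sum_congr rfl fun v _ => ?_
    rw [Finset.filter_filter]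
    refine Finset.sum_congr rfl fun σ hσ => ?_
    simp only [Finset.mem_filter] at hσ
    rw [hσ.2.2]
  have h2 : ∀ v : F, ∑ σ ∈ Finset.univ.filter
      (fun σ : Equiv.Perm F => σ 0 = 0 ∧ tmap σ = v), psi F v
      = (cnt F v : ℂ) * psi F v := by
    intro v
    rw [Finset.sum_const, cnt, nsmul_eq_mul]
  rw [h, Finset.sum_congr rfl fun v _ => h2 v]
  rw [← Finset.add_sum_erase Finset.univ _ (Finset.mem_univ (0 : F))]
  have h3 : ∑ v ∈ Finset.univ.erase (0 : F), (cnt F v : ℂ) * psi F v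
      = (cnt F 1 : ℂ) * ∑ v ∈ Finset.univ.erase (0 : F), psi F v := by
    rw [Finset.mul_sum]
    refine Finset.sum_congr rfl fun v hv => ?_
    rw [cnt_eq_cnt_one hq3 (Finset.mem_erase.mp hv).1]
  have h4 : ∑ v ∈ Finset.univ.erase (0 : F), psi F v = -1 := by
    have h5 : ∑ v : F, psi F v = 0 := AddChar.sum_eq_zero_of_ne_one psi_ne_one
    rw [← Finset.add_sum_erase Finset.univ _ (Finset.mem_univ (0 : F))] at h5
    rw [AddChar.map_zero_eq_one] at h5
    linear_combination h5
  rw [h3, h4, AddChar.map_zero_eq_one]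
  ring

lemma Afull_norm_sq_le :
    Complex.normSq (Afull F) ≤ (Fintype.card F : ℝ) ^ (Fintype.card F) := by
  classical
  set n := (Fintype.card F).factorial with hn
  have hnpos : 0 < (n : ℝ) := by positivity
  -- sum of normSq of Qf over all functions
  have hsum : ∑ j : F → F, Complex.normSq (Qf j)
      = (n : ℝ) * (Fintype.card F : ℝ) ^ (Fintype.card F) := by
    have := Qf_normSq_sum (F := F)
    have h2 : ∑ j : F → F, Qf j * (starRingEnd ℂ) (Qf j)
        = ((∑ j : F → F, Complex.normSq (Qf j) : ℝ) : ℂ) := by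
      push_cast
      exact Finset.sum_congr rfl fun j _ => (Complex.mul_conj (Qf j))
    rw [h2] at this
    have h3 : ((∑ j : F → F, Complex.normSq (Qf j) : ℝ) : ℂ)
        = (((n : ℝ) * (Fintype.card F : ℝ) ^ (Fintype.card F) : ℝ) : ℂ) := by
      rw [this]; push_cast; ring
    exact_mod_cast Complex.ofReal_injective h3
  -- restrict to permutations
  have hperm : ∑ π : Equiv.Perm F, Complex.normSq (Qf ⇑π)
      ≤ (n : ℝ) * (Fintype.card F : ℝ) ^ (Fintype.card F) := by
    rw [← hsum]
    have himg : ∑ π : Equiv.Perm F, Complex.normSq (Qf ⇑π)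
        = ∑ j ∈ Finset.univ.image (fun π : Equiv.Perm F => ⇑π),
            Complex.normSq (Qf j) := by
      rw [Finset.sum_image (fun π _ τ _ h => Equiv.coe_fn_injective h)]
    rw [himg]
    exact Finset.sum_le_sum_of_subset_of_nonneg (Finset.subset_univ _)
      (fun j _ _ => Complex.normSq_nonneg _)
  -- each Qf π equals Afull
  have hQA : ∀ π : Equiv.Perm F, Complex.normSq (Qf ⇑π) = Complex.normSq (Afull F) :=
    fun π => by rw [Qf_perm]
  rw [Finset.sum_congr rfl fun π _ => hQA π, Finset.sum_const, Finset.card_univ,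
    Fintype.card_perm, nsmul_eq_mul] at hperm
  exact le_of_mul_le_mul_left hperm hnpos

end CharSum3

lemma delta_bound (hq3 : 3 ≤ Fintype.card F) :
    |(cnt F 0 : ℝ) - (cnt F 1 : ℝ)| * (Fintype.card F : ℝ)
      ≤ (Fintype.card F : ℝ) ^ ((Fintype.card F : ℝ) / 2) := by
  classical
  set q := Fintype.card F with hq
  set δ := (cnt F 0 : ℝ) - (cnt F 1 : ℝ) with hδ
  have hq0 : (0:ℝ) < (q:ℝ) := by positivity
  have hnorm : Complex.normSq (Afull F) = (q:ℝ)^2 * δ^2 := by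
    rw [Afull_eq hq3, Spsi_eq hq3]
    have : ((cnt F 0 : ℂ) - (cnt F 1 : ℂ)) = ((δ : ℝ) : ℂ) := by
      rw [hδ]; push_cast; ring
    rw [this, Complex.normSq_mul]
    simp [Complex.normSq_ofReal, Complex.normSq_natCast]
    ring
  have hb := Afull_norm_sq_le (F := F)
  rw [hnorm] at hb
  have hrpow : ((q:ℝ) ^ ((q:ℝ)/2))^2 = (q:ℝ) ^ (q : ℕ) := by
    rw [← Real.rpow_natCast ((q:ℝ) ^ ((q:ℝ)/2)) 2, ← Real.rpow_mul (le_of_lt hq0)]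
    norm_num
  have hsq : (|δ| * (q:ℝ))^2 ≤ ((q:ℝ) ^ ((q:ℝ)/2))^2 := by
    rw [hrpow, mul_pow, sq_abs]
    calc δ^2 * (q:ℝ)^2 = (q:ℝ)^2 * δ^2 := by ring
      _ ≤ (q:ℝ) ^ (q : ℕ) := hb
  have h1 : (0:ℝ) ≤ |δ| * (q:ℝ) := by positivity
  have h2 : (0:ℝ) ≤ (q:ℝ) ^ ((q:ℝ)/2) := Real.rpow_nonneg (le_of_lt hq0) _
  exact (abs_le_of_sq_le_sq' hsq h2).2

end Stmt11
theorem stmt_11 {F : Type*} [Field F] [Fintype F] (q : ℕ) (hq : Fintype.card F = q)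
    (hq3 : 3 ≤ q) :
    (1 - 1 / (q : ℝ)) * (Nat.factorial (q - 1) - (q : ℝ) ^ ((q : ℝ) / 2) / ((q : ℝ) - 1)) ≤
      (Nat.card {f : F[X] // f.natDegree = q - 2 ∧ f.coeff 0 = 0 ∧
        Function.Bijective fun x => f.eval x} : ℝ) ∧
    (Nat.card {f : F[X] // f.natDegree = q - 2 ∧ f.coeff 0 = 0 ∧
        Function.Bijective fun x => f.eval x} : ℝ) ≤
      (1 - 1 / (q : ℝ)) * (Nat.factorial (q - 1) + (q : ℝ) ^ ((q : ℝ) / 2) / ((q : ℝ) - 1)) := by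
  classical
  subst hq
  set q := Fintype.card F with hqdef
  letI : DecidableEq F := Classical.decEq F
  -- identify the count
  have hcardN : Nat.card {f : F[X] // f.natDegree = q - 2 ∧ f.coeff 0 = 0 ∧
      Function.Bijective fun x => f.eval x}
      = (Finset.univ.filter
          (fun σ : Equiv.Perm F => σ 0 = 0 ∧ Stmt11.tmap σ ≠ 0)).card := by
    rw [Nat.card_congr (Stmt11.polyEquiv hq3), Nat.card_eq_fintype_card,
      Fintype.card_subtype]
    congr 1
  set N : ℕ := (Finset.univ.filter
      (fun σ : Equiv.Perm F => σ 0 = 0 ∧ Stmt11.tmap σ ≠ 0)).card with hN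
  set a : ℕ := Stmt11.cnt F 0 with ha
  set b : ℕ := Stmt11.cnt F 1 with hb
  have e1 : a + (q - 1) * b = (q - 1).factorial := Stmt11.cnt_sum_eq hq3
  have e2 : a + N = (q - 1).factorial := Stmt11.cnt_add_N hq3
  have e3 : |(a : ℝ) - (b : ℝ)| * (q : ℝ) ≤ (q : ℝ) ^ ((q : ℝ) / 2) :=
    Stmt11.delta_bound hq3
  have hq0 : (0:ℝ) < (q:ℝ) := by positivity
  have hq1 : (0:ℝ) < (q:ℝ) - 1 := by
    have : (3:ℝ) ≤ (q:ℝ) := by exact_mod_cast hq3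
    linarith
  have hP : (0:ℝ) ≤ (q : ℝ) ^ ((q : ℝ) / 2) := Real.rpow_nonneg (le_of_lt hq0) _
  -- bound on delta
  have hδ : |(a : ℝ) - (b : ℝ)| ≤ (q : ℝ) ^ ((q : ℝ) / 2) / ((q:ℝ) - 1) := by
    have h1 : |(a : ℝ) - (b : ℝ)| ≤ (q : ℝ) ^ ((q : ℝ) / 2) / (q:ℝ) :=
      (le_div_iff₀ hq0).mpr e3
    refine h1.trans ?_
    exact div_le_div_of_nonneg_left hP hq1 (by linarith)
  -- real versions of counting equations
  have re1 : (a : ℝ) + ((q:ℝ) - 1) * (b:ℝ) = ((q-1).factorial : ℝ) := by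
    have h := congrArg (fun n : ℕ => (n : ℝ)) e1
    push_cast [Nat.cast_sub (show 1 ≤ q by omega)] at h
    linarith [h]
  have re2 : (a : ℝ) + (N : ℝ) = ((q-1).factorial : ℝ) := by exact_mod_cast e2
  -- exact formula
  have hformula : (N : ℝ) = (1 - 1/(q:ℝ)) * (((q-1).factorial : ℝ) - ((a:ℝ) - (b:ℝ))) := by
    have hNb : (N : ℝ) = ((q:ℝ) - 1) * (b:ℝ) := by linarith
    rw [hNb, ← re1]
    field_simp
    ring
  have h1q : (0:ℝ) ≤ 1 - 1/(q:ℝ) := by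
    rw [sub_nonneg, div_le_one hq0]
    linarith
  have habs1 : ((a:ℝ) - (b:ℝ)) ≤ (q : ℝ) ^ ((q : ℝ) / 2) / ((q:ℝ) - 1) :=
    (le_abs_self _).trans hδ
  have habs2 : -((q : ℝ) ^ ((q : ℝ) / 2) / ((q:ℝ) - 1)) ≤ ((a:ℝ) - (b:ℝ)) :=
    neg_le_of_abs_le hδ
  rw [hcardN]
  constructor
  · rw [hformula]
    apply mul_le_mul_of_nonneg_left _ h1q
    linarith
  · rw [hformula]
    apply mul_le_mul_of_nonneg_left _ h1q
    linarith
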